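/- Let q be a natural number, Q an integer, P a positive integer, and a an integer with 1 ≤ a < q and gcd(a,q) = 1. Then ∑_{n=1}^{q} |∑_{x=Q+1}^{Q+P} e(n·a·x/q)| ≤ P + q·log q, where e(t) = exp(2πit). -/

import Mathlib

/-- `e(t) = exp(2πit)`. -/

noncomputable def eC (t : ℝ) : ℂ := Complex.exp (2 * Real.pi * Complex.I * t)
lemma eC_ne_zero (t : ℝ) : eC t ≠ 0 := Complex.exp_ne_zero _
lemma eC_abs (t : ℝ) : ‖eC t‖ = 1 := by
  rw [eC, Complex.norm_exp]; simp [Complex.mul_re, Complex.mul_im]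

lemma trivial_bound (Q : ℤ) (P : ℕ) (f : ℤ → ℝ) :
    ‖∑ x ∈ Finset.Icc (Q + 1) (Q + (P : ℤ)), eC (f x)‖ ≤ P := by
  refine le_trans (norm_sum_le _ _) ?_
  have : ∀ x ∈ Finset.Icc (Q + 1) (Q + (P : ℤ)), ‖eC (f x)‖ = 1 :=
    fun x _ => eC_abs _
  rw [Finset.sum_congr rfl this, Finset.sum_const, Int.card_Icc]
  simp

lemma Icc_insert (Q : ℤ) (P : ℕ) :
    Finset.Icc (Q + 1) (Q + ((P:ℕ)+1 : ℕ)) = insert (Q + (P:ℤ) + 1) (Finset.Icc (Q + 1) (Q + (P:ℤ))) := by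
  ext x
  simp only [Finset.mem_Icc, Finset.mem_insert]
  push_cast
  omega

lemma telescope (ζ : ℂ) (hζ : ζ ≠ 0) (Q : ℤ) (P : ℕ) :
    (ζ - 1) * ∑ x ∈ Finset.Icc (Q + 1) (Q + (P : ℤ)), ζ ^ x
      = ζ ^ (Q + 1 + P) - ζ ^ (Q + 1) := by
  induction P with
  | zero => simp
  | succ P ih =>
      rw [Icc_insert, Finset.sum_insert (by simp), mul_add, ih]
      have h1 : ζ ^ (Q + 1 + ((P:ℕ)+1:ℕ)) = ζ ^ (Q + (P:ℤ) + 1) * ζ := by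
        rw [← zpow_add_one₀ hζ]
        congr 1
        push_cast
        ring
      have h2 : ζ ^ (Q + 1 + (P:ℤ)) = ζ ^ (Q + (P:ℤ) + 1) := by ring_nf
      rw [h1, h2]; ring

lemma geom_bound (ζ : ℂ) (hζ : ‖ζ‖ = 1) (h1 : ζ ≠ 1) (Q : ℤ) (P : ℕ) :
    ‖∑ x ∈ Finset.Icc (Q + 1) (Q + (P : ℤ)), ζ ^ x‖
      ≤ 2 / ‖ζ - 1‖ := by
  have hζ0 : ζ ≠ 0 := by intro h; simp [h] at hζ
  have hd : 0 < ‖ζ - 1‖ := by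
    simp [norm_pos_iff, sub_ne_zero.2 h1]
  rw [le_div_iff₀ hd]
  have := telescope ζ hζ0 Q P
  calc ‖∑ x ∈ Finset.Icc (Q + 1) (Q + (P : ℤ)), ζ ^ x‖ * ‖ζ - 1‖
      = ‖(ζ - 1) * ∑ x ∈ Finset.Icc (Q + 1) (Q + (P : ℤ)), ζ ^ x‖ := by
        rw [norm_mul]; ring
    _ = ‖ζ ^ (Q + 1 + P) - ζ ^ (Q + 1)‖ := by rw [this]
    _ ≤ ‖ζ ^ (Q + 1 + (P:ℤ))‖ + ‖ζ ^ (Q + 1)‖ := by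
        exact norm_sub_le _ _
    _ ≤ 2 := by
        rw [norm_zpow, norm_zpow, hζ, one_zpow, one_zpow]
        norm_num

lemma eC_add_int (t : ℝ) (k : ℤ) : eC (t + k) = eC t := by
  rw [eC, eC]
  push_cast
  rw [mul_add, Complex.exp_add]
  have : Complex.exp (2 * Real.pi * Complex.I * k) = 1 := by
    rw [show (2 * (Real.pi:ℂ) * Complex.I * k) = k * (2 * Real.pi * Complex.I) by ring,
      Complex.exp_int_mul_two_pi_mul_I]
  rw [this, mul_one]

lemma eC_int_mul (t : ℝ) (x : ℤ) : eC (t * x) = (eC t) ^ x := by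
  rw [eC, eC, ← Complex.exp_int_mul]
  congr 1
  push_cast
  ring

lemma abs_eC_sub_one (t : ℝ) : ‖eC t - 1‖ = 2 * |Real.sin (Real.pi * t)| := by
  have h : eC t = Complex.exp ((2*Real.pi*t : ℝ) * Complex.I) := by
    rw [eC]; congr 1; push_cast; ring
  set θ : ℝ := 2*Real.pi*t with hθ
  rw [h, Complex.exp_mul_I]
  have hre : (Complex.cos (θ:ℂ) + Complex.sin (θ:ℂ) * Complex.I - 1)
      = Complex.mk (Real.cos θ - 1) (Real.sin θ) := by
    apply Complex.ext <;>
      simp [Complex.cos_ofReal_re, Complex.sin_ofReal_re, Complex.cos_ofReal_im,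
        Complex.sin_ofReal_im]
  rw [hre, Complex.norm_def, Complex.normSq_mk]
  have key : (Real.cos θ - 1) * (Real.cos θ - 1) + Real.sin θ * Real.sin θ
      = (2 * Real.sin (Real.pi*t))^2 := by
    have h2 : θ = 2 * (Real.pi * t) := by rw [hθ]; ring
    have hc := Real.cos_two_mul (Real.pi * t)
    rw [← h2] at hc
    nlinarith [Real.sin_sq_add_cos_sq θ, Real.sin_sq_add_cos_sq (Real.pi*t)]
  rw [key, Real.sqrt_sq_eq_abs, abs_mul]
  norm_num

lemma sin_lb (q m : ℕ) (hm : 1 ≤ m) (hmq : m < q) :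
    2 * ((min m (q-m) : ℕ) : ℝ) / q ≤ |Real.sin (Real.pi * (m / q))| := by
  have hq : 0 < q := lt_of_le_of_lt (Nat.zero_le m) hmq
  have hqR : (0:ℝ) < q := by exact_mod_cast hq
  have main : ∀ k : ℕ, 1 ≤ k → 2*k ≤ q → 2*(k:ℝ)/q ≤ Real.sin (Real.pi * (k/q)) := by
    intro k hk hkq
    have hx0 : (0:ℝ) ≤ Real.pi * (k/q) := by positivity
    have hk2 : (k:ℝ)/q ≤ 1/2 := by
      rw [div_le_div_iff₀ hqR two_pos]
      exact_mod_cast by linarith [(by exact_mod_cast hkq : (2*k:ℝ) ≤ q)]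
    have hx1 : Real.pi * ((k:ℝ)/q) ≤ Real.pi / 2 := by
      have := mul_le_mul_of_nonneg_left hk2 Real.pi_pos.le
      linarith
    have h := Real.mul_le_sin hx0 hx1
    have hsin : 2 / Real.pi * (Real.pi * ((k:ℝ)/q)) = 2 * k / q := by
      field_simp
    rw [hsin] at h
    exact h
  rcases le_or_gt (2*m) q with hc | hc
  · have hmin : min m (q - m) = m := by omega
    rw [hmin]
    exact (main m hm hc).trans (le_abs_self _)
  · have hmin : min m (q - m) = q - m := by omega
    rw [hmin]
    have hcast : ((q - m : ℕ) : ℝ) = (q:ℝ) - m := by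
      have h1 : m ≤ q := le_of_lt hmq
      push_cast [h1]; ring
    have hflip : Real.sin (Real.pi * ((m:ℝ)/q)) = Real.sin (Real.pi * (((q-m:ℕ):ℝ)/q)) := by
      rw [← Real.sin_pi_sub]
      congr 1
      rw [hcast]
      field_simp
    rw [hflip]
    exact (main (q-m) (by omega) (by omega)).trans (le_abs_self _)

lemma two_mul_le_log_div (u : ℝ) (h0 : 0 ≤ u) (h1 : u < 1) :
    2*u ≤ Real.log (1+u) - Real.log (1-u) := by
  set f : ℝ → ℝ := fun x => Real.log (1+x) - Real.log (1-x) - 2*x with hf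
  have hasd : ∀ x ∈ Set.Ioo (-1:ℝ) 1,
      HasDerivAt f (1/(1+x) - (1/(1-x))*(-1) - 2*1) x := by
    intro x hx
    have h1x : (0:ℝ) < 1 + x := by linarith [hx.1]
    have h2x : (0:ℝ) < 1 - x := by linarith [hx.2]
    have d1 : HasDerivAt (fun x : ℝ => Real.log (1+x)) (1/(1+x)) x := by
      have := (Real.hasDerivAt_log (ne_of_gt h1x)).comp x
        ((hasDerivAt_id' x).const_add 1)
      simpa [Function.comp_def] using this
    have d2 : HasDerivAt (fun x : ℝ => Real.log (1-x)) ((1/(1-x))*(-1)) x := by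
      have inner : HasDerivAt (fun x : ℝ => 1 - x) (-1) x := by
        exact (hasDerivAt_id' x).const_sub 1
      have := (Real.hasDerivAt_log (ne_of_gt h2x)).comp x inner
      simpa [div_eq_mul_inv, Function.comp_def] using this
    have d3 : HasDerivAt (fun x : ℝ => 2*x) (2*1) x := (hasDerivAt_id x).const_mul 2
    exact (d1.sub d2).sub d3
  have hsub : Set.Icc (0:ℝ) u ⊆ Set.Ioo (-1:ℝ) 1 := by
    intro x hx
    exact ⟨by linarith [hx.1], lt_of_le_of_lt hx.2 h1⟩
  have hmono : MonotoneOn f (Set.Icc 0 u) := by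
    apply monotoneOn_of_deriv_nonneg (convex_Icc 0 u)
    · exact ContinuousOn.mono
        (fun x hx => ((hasd x hx).differentiableAt.continuousAt.continuousWithinAt)) hsub
    · intro x hx
      rw [interior_Icc] at hx
      exact ((hasd x (hsub (Set.mem_Icc_of_Ioo hx))).differentiableAt).differentiableWithinAt
    · intro x hx
      rw [interior_Icc] at hx
      have hx' := hsub (Set.mem_Icc_of_Ioo hx)
      rw [(hasd x hx').deriv]
      have h1x : (0:ℝ) < 1 + x := by linarith [hx'.1]
      have h2x : (0:ℝ) < 1 - x := by linarith [hx'.2]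
      have : 1/(1+x) + 1/(1-x) = 2/((1+x)*(1-x)) := by field_simp; ring
      have hprod : (0:ℝ) < (1+x)*(1-x) := mul_pos h1x h2x
      have h2 : 2/((1+x)*(1-x)) ≥ 2 := by
        rw [ge_iff_le, le_div_iff₀ hprod]
        nlinarith [sq_nonneg x]
      nlinarith
  have := hmono (Set.left_mem_Icc.2 h0) (Set.right_mem_Icc.2 h0) h0
  simp only [hf] at this
  simp at this
  linarith [this]

-- 1/m ≤ log(2m+1) - log(2m-1)
lemma one_div_le_log (m : ℕ) (hm : 1 ≤ m) :
    (1:ℝ)/m ≤ Real.log (2*m+1) - Real.log (2*m-1) := by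
  have hmR : (1:ℝ) ≤ m := by exact_mod_cast hm
  have h2m : (0:ℝ) < 2*m := by linarith
  have hu0 : (0:ℝ) ≤ 1/(2*m) := by positivity
  have hu1 : (1:ℝ)/(2*m) < 1 := by
    rw [div_lt_one h2m]; linarith
  have key := two_mul_le_log_div (1/(2*(m:ℝ))) hu0 hu1
  have e1 : (1:ℝ) + 1/(2*m) = (2*m+1)/(2*m) := by field_simp
  have e2 : (1:ℝ) - 1/(2*m) = (2*m-1)/(2*m) := by field_simp
  rw [e1, e2, Real.log_div (by positivity) (by positivity),
    Real.log_div (by nlinarith) (by positivity)] at key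
  have : 2 * (1/(2*(m:ℝ))) = 1/m := by field_simp
  rw [this] at key
  linarith

lemma harmonic_le_log (k : ℕ) :
    ∑ m ∈ Finset.Icc 1 k, (1:ℝ)/m ≤ Real.log (2*k+1) := by
  induction k with
  | zero => simp
  | succ k ih =>
      rw [Finset.sum_Icc_succ_top (by omega)]
      have h := one_div_le_log (k+1) (by omega)
      have e : (2*((k:ℝ)+1)-1) = 2*(k:ℝ)+1 := by ring
      push_cast at h ⊢
      rw [e] at h
      linarith

lemma min_sum_le_log (q : ℕ) (hq : 2 ≤ q) :
    ∑ m ∈ Finset.Icc 1 (q-1), (1:ℝ)/(2 * (min m (q-m) : ℕ)) ≤ Real.log q := by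
  set r := q / 2 with hr
  set s := q - 1 - r with hs
  have hqrs : q = r + s + 1 ∧ s ≤ r ∧ r ≤ s + 1 ∧ 1 ≤ r := by omega
  have hsplit : Finset.Icc 1 (q-1) = Finset.Icc 1 r ∪ Finset.Icc (r+1) (q-1) := by
    ext m; simp only [Finset.mem_Icc, Finset.mem_union]; omega
  have hdisj : Disjoint (Finset.Icc 1 r) (Finset.Icc (r+1) (q-1)) := by
    simp only [Finset.disjoint_left, Finset.mem_Icc]
    omega
  rw [hsplit, Finset.sum_union hdisj]
  have h1 : ∑ m ∈ Finset.Icc 1 r, (1:ℝ)/(2 * (min m (q-m) : ℕ))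
      = ∑ m ∈ Finset.Icc 1 r, (1:ℝ)/(2 * m) := by
    apply Finset.sum_congr rfl
    intro m hm
    simp only [Finset.mem_Icc] at hm
    have : min m (q - m) = m := by omega
    rw [this]
  have h2 : ∑ m ∈ Finset.Icc (r+1) (q-1), (1:ℝ)/(2 * (min m (q-m) : ℕ))
      = ∑ m ∈ Finset.Icc 1 s, (1:ℝ)/(2 * m) := by
    apply Finset.sum_nbij' (fun m => q - m) (fun m => q - m)
    · intro m hm; simp only [Finset.mem_Icc] at *; omega
    · intro m hm; simp only [Finset.mem_Icc] at *; omega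
    · intro m hm; simp only [Finset.mem_Icc] at *; omega
    · intro m hm; simp only [Finset.mem_Icc] at *; omega
    · intro m hm
      simp only [Finset.mem_Icc] at hm
      have : min m (q - m) = q - m := by omega
      rw [this]
  rw [h1, h2]
  have hhalf : ∀ k : ℕ, ∑ m ∈ Finset.Icc 1 k, (1:ℝ)/(2*m)
      = (1/2) * ∑ m ∈ Finset.Icc 1 k, (1:ℝ)/m := by
    intro k
    rw [Finset.mul_sum]
    apply Finset.sum_congr rfl
    intro m _
    rw [div_mul_eq_mul_div, one_mul, one_div, one_div, mul_inv]
    ring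
  rw [hhalf, hhalf]
  have b1 := harmonic_le_log r
  have b2 := harmonic_le_log s
  have hqR : ((q:ℝ)) = r + s + 1 := by exact_mod_cast congrArg (Nat.cast : ℕ → ℝ) hqrs.1
  have hq0 : (0:ℝ) < q := by positivity
  have hprod : ((2*(r:ℝ)+1)) * (2*(s:ℝ)+1) ≤ (q:ℝ) * q := by
    have hsr : (s:ℝ) ≤ r := by exact_mod_cast hqrs.2.1
    have hrs : (r:ℝ) ≤ s + 1 := by exact_mod_cast hqrs.2.2.1
    rw [hqR]
    nlinarith [sq_nonneg ((r:ℝ) - s)]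
  have hlog : Real.log (2*(r:ℝ)+1) + Real.log (2*(s:ℝ)+1) ≤ 2 * Real.log q := by
    rw [← Real.log_mul (by positivity) (by positivity)]
    calc Real.log ((2*(r:ℝ)+1) * (2*(s:ℝ)+1)) ≤ Real.log ((q:ℝ)*q) :=
          Real.log_le_log (by positivity) hprod
      _ = 2 * Real.log q := by rw [Real.log_mul hq0.ne' hq0.ne']; ring
  linarith

section bij
variable (q : ℕ) [NeZero q]

lemma sum_icc_zmod (g : ZMod q → ℝ) :
    ∑ n ∈ Finset.Icc 1 q, g ((n : ℕ) : ZMod q) = ∑ z : ZMod q, g z := by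
  have hq : 1 ≤ q := Nat.one_le_iff_ne_zero.2 (NeZero.ne q)
  apply Finset.sum_nbij' (fun n => ((n : ℕ) : ZMod q))
    (fun z => if z.val = 0 then q else z.val)
  · intro n _; exact Finset.mem_univ _
  · intro z _
    simp only [Finset.mem_Icc]
    split
    · omega
    · have := ZMod.val_lt z; omega
  · intro n hn
    simp only [Finset.mem_Icc] at hn
    rw [ZMod.val_natCast]
    rcases eq_or_lt_of_le hn.2 with h | h
    · subst h; simp
    · rw [Nat.mod_eq_of_lt h, if_neg (by omega)]
  · intro z _
    split
    · rename_i h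
      rw [ZMod.natCast_self]
      exact ((ZMod.val_eq_zero z).1 h).symm
    · rw [ZMod.natCast_val, ZMod.cast_id]
  · intro n _; rfl

lemma sum_zmod_range (f : ℕ → ℝ) :
    ∑ z : ZMod q, f z.val = ∑ m ∈ Finset.range q, f m := by
  apply Finset.sum_nbij' (fun z => ZMod.val z) (fun m => ((m : ℕ) : ZMod q))
  · intro z _; exact Finset.mem_range.2 (ZMod.val_lt z)
  · intro m _; exact Finset.mem_univ _
  · intro z _; rw [ZMod.natCast_val, ZMod.cast_id]
  · intro m hm; exact ZMod.val_natCast_of_lt (Finset.mem_range.1 hm)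
  · intro z _; rfl

lemma sum_mul_unit (u : ZMod q) (hu : IsUnit u) (F : ZMod q → ℝ) :
    ∑ z : ZMod q, F (z * u) = ∑ z : ZMod q, F z :=
  Fintype.sum_bijective _ (IsUnit.isUnit_iff_mulRight_bijective.1 hu) _ _ (fun z => rfl)

end bij

lemma per_bound (q : ℕ) (Q : ℤ) (P : ℕ) (c : ℤ) (m : ℕ) (hq : 2 ≤ q) (hmq : m < q)
    (hdvd : (q:ℤ) ∣ c - m) :
    ‖∑ x ∈ Finset.Icc (Q+1) (Q+(P:ℤ)), eC (((c*x : ℤ):ℝ)/q)‖ ≤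
      (if m = 0 then (P:ℝ) else (q:ℝ)/(2*((min m (q-m) : ℕ):ℝ))) := by
  rcases eq_or_ne m 0 with h0 | h0
  · rw [if_pos h0]
    exact trivial_bound Q P _
  rw [if_neg h0]
  have hq0 : q ≠ 0 := by omega
  have hqR : (0:ℝ) < q := by positivity
  obtain ⟨k, hk⟩ := hdvd
  have hcZ : c = (m:ℤ) + q*k := by linarith
  have hterm : ∀ x : ℤ, eC (((c*x : ℤ):ℝ)/q) = (eC ((m:ℝ)/q)) ^ x := by
    intro x
    rw [← eC_int_mul]
    have harg : ((m:ℝ)/q) * x = ((c*x : ℤ):ℝ)/q + ((-(k*x) : ℤ):ℝ) := by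
      rw [hcZ]
      push_cast
      field_simp
      ring
    rw [harg, eC_add_int]
  rw [Finset.sum_congr rfl (fun x _ => hterm x)]
  have habs := eC_abs ((m:ℝ)/q)
  have hmin1 : (1:ℝ) ≤ ((min m (q-m) : ℕ):ℝ) := by
    exact_mod_cast (by omega : 1 ≤ min m (q-m))
  have hlb : 4 * ((min m (q-m) : ℕ):ℝ)/q ≤ ‖eC ((m:ℝ)/q) - 1‖ := by
    rw [abs_eC_sub_one]
    have := sin_lb q m (by omega) hmq
    rw [div_le_iff₀ hqR] at this ⊢
    linarith
  have hlb0 : 0 < ‖eC ((m:ℝ)/q) - 1‖ :=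
    lt_of_lt_of_le (by positivity) hlb
  have hne1 : eC ((m:ℝ)/q) ≠ 1 := by
    intro h
    rw [h] at hlb0
    simp at hlb0
  refine (geom_bound _ habs hne1 Q P).trans ?_
  rw [div_le_div_iff₀ hlb0 (by positivity)]
  rw [div_le_iff₀ hqR] at hlb
  nlinarith

/-- Korobov's lemma: for `1 ≤ a < q` with `gcd(a,q) = 1`,
`∑_{n=1}^{q} |∑_{x=Q+1}^{Q+P} e(n·a·x/q)| ≤ P + q·log q`. -/
theorem korobov_geometric_sum (q : ℕ) (Q : ℤ) (P : ℕ) (hP : 1 ≤ P)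
    (a : ℤ) (ha1 : 1 ≤ a) (ha2 : a < (q : ℤ)) (hgcd : Int.gcd a (q : ℤ) = 1) :
    ∑ n ∈ Finset.Icc 1 q,
        ‖∑ x ∈ Finset.Icc (Q + 1) (Q + (P : ℤ)),
          eC ((((n : ℤ) * a * x : ℤ) : ℝ) / (q : ℝ))‖ ≤
      (P : ℝ) + (q : ℝ) * Real.log q := by
  have hq2 : 2 ≤ q := by
    by_contra h
    interval_cases q <;> omega
  haveI : NeZero q := ⟨by omega⟩
  set F : ℕ → ℝ := fun m => if m = 0 then (P:ℝ) else (q:ℝ)/(2*((min m (q-m) : ℕ):ℝ)) with hF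
  -- unit
  have hunit : IsUnit ((a : ℤ) : ZMod q) := by
    have ha0 : 0 ≤ a := by linarith
    have hcop : Nat.Coprime a.toNat q := by
      have h1 : a.natAbs.gcd q = 1 := by simpa [Int.gcd] using hgcd
      have h2 : a.natAbs = a.toNat := by omega
      rwa [h2] at h1
    have hu := (ZMod.isUnit_iff_coprime a.toNat q).2 hcop
    have he : ((a.toNat : ℕ) : ZMod q) = ((a : ℤ) : ZMod q) := by
      rw [← Int.toNat_of_nonneg ha0]
      push_cast
      rfl
    rwa [he] at hu
  -- step 1
  have step1 : ∑ n ∈ Finset.Icc 1 q,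
      ‖∑ x ∈ Finset.Icc (Q + 1) (Q + (P : ℤ)),
        eC ((((n : ℤ) * a * x : ℤ) : ℝ) / (q : ℝ))‖
      ≤ ∑ n ∈ Finset.Icc 1 q, F ((((n : ℤ) * a : ℤ) : ZMod q)).val := by
    apply Finset.sum_le_sum
    intro n _
    exact per_bound q Q P ((n:ℤ)*a) _ hq2 (ZMod.val_lt _)
      (by
        rw [← ZMod.intCast_zmod_eq_zero_iff_dvd]
        push_cast
        rw [ZMod.natCast_val, ZMod.cast_id]
        push_cast
        ring)
  -- step 2 : bijection
  have step2 : ∑ n ∈ Finset.Icc 1 q, F ((((n : ℤ) * a : ℤ) : ZMod q)).val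
      = ∑ m ∈ Finset.range q, F m := by
    have hrw : ∀ n : ℕ, ((((n : ℤ) * a : ℤ) : ZMod q)) = ((n:ℕ) : ZMod q) * ((a : ℤ) : ZMod q) := by
      intro n
      push_cast
      ring
    calc ∑ n ∈ Finset.Icc 1 q, F ((((n : ℤ) * a : ℤ) : ZMod q)).val
        = ∑ n ∈ Finset.Icc 1 q, (fun z => F ((z * ((a : ℤ) : ZMod q)).val)) ((n:ℕ) : ZMod q) := by
          apply Finset.sum_congr rfl
          intro n _
          simp only [hrw]
      _ = ∑ z : ZMod q, F ((z * ((a : ℤ) : ZMod q)).val) := sum_icc_zmod q (fun z => F ((z * ((a : ℤ) : ZMod q)).val))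
      _ = ∑ z : ZMod q, F z.val := sum_mul_unit q _ hunit (fun w => F w.val)
      _ = ∑ m ∈ Finset.range q, F m := sum_zmod_range q F
  -- step 3
  have hins : Finset.range q = insert 0 (Finset.Icc 1 (q-1)) := by
    ext m
    simp only [Finset.mem_range, Finset.mem_insert, Finset.mem_Icc]
    omega
  have step3 : ∑ m ∈ Finset.range q, F m ≤ (P:ℝ) + (q:ℝ) * Real.log q := by
    rw [hins, Finset.sum_insert (by simp)]
    have hF0 : F 0 = (P:ℝ) := by simp [hF]
    have hFm : ∑ m ∈ Finset.Icc 1 (q-1), F m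
        = (q:ℝ) * ∑ m ∈ Finset.Icc 1 (q-1), (1:ℝ)/(2 * ((min m (q-m) : ℕ):ℝ)) := by
      rw [Finset.mul_sum]
      apply Finset.sum_congr rfl
      intro m hm
      simp only [Finset.mem_Icc] at hm
      rw [hF]
      simp only [if_neg (by omega : ¬ m = 0)]
      rw [div_eq_mul_one_div]
    rw [hF0, hFm]
    have hmin := min_sum_le_log q hq2
    have : (q:ℝ) * ∑ m ∈ Finset.Icc 1 (q-1), (1:ℝ)/(2 * ((min m (q-m) : ℕ):ℝ))
        ≤ (q:ℝ) * Real.log q := by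
      exact mul_le_mul_of_nonneg_left hmin (by positivity)
    linarith
  calc _ ≤ ∑ n ∈ Finset.Icc 1 q, F ((((n : ℤ) * a : ℤ) : ZMod q)).val := step1
    _ = ∑ m ∈ Finset.range q, F m := step2
    _ ≤ _ := step3
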